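/- Let p and q be odd primes with q ≠ p, let D be a squarefree integer, let j ≥ 1 be an integer, and let z ∈ ℤ[√D]. If Φ_p(z^{p^{j−1}}) ≡ 0 (mod q), then z^{p^j} ≡ 1 (mod q) and z^{p^{j−1}} ≢ 1 (mod q); in other words, the multiplicative order of z modulo q is exactly p^j. -/
import Mathlib


/-- Key lemma from the proofs of Theorems 1.1 and 1.2: if `q ≠ p` is an odd
prime and `Φ_p(z^{p^{j−1}}) ≡ 0 (mod q)` in `ℤ[√D]`, then the multiplicative
order of `z` modulo `q` is exactly `p^j`. -/
theorem stmt_11 (p q : ℕ) (hp : p.Prime) (hq : q.Prime)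
    (hpodd : Odd p) (hqodd : Odd q) (hqp : q ≠ p)
    (D : ℤ) (hD : Squarefree D)
    (j : ℕ) (hj : 1 ≤ j) (z : Zsqrtd D)
    (hΦ : (q : Zsqrtd D) ∣
      (Polynomial.aeval (z ^ (p ^ (j - 1))) (Polynomial.cyclotomic p ℤ))) :
    (q : Zsqrtd D) ∣ (z ^ (p ^ j) - 1) ∧
      ¬ (q : Zsqrtd D) ∣ (z ^ (p ^ (j - 1)) - 1) := by
  haveI := Fact.mk hp
  set w := z ^ (p ^ (j - 1)) with hw
  have hcyc : (Polynomial.aeval w (Polynomial.cyclotomic p ℤ)) =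
      ∑ i ∈ Finset.range p, w ^ i := by
    rw [Polynomial.cyclotomic_prime]
    simp
  rw [hcyc] at hΦ
  have hpj : z ^ (p ^ j) = w ^ p := by
    rw [hw, ← pow_mul, ← pow_succ, Nat.sub_add_cancel hj]
  constructor
  · rw [hpj, ← geom_sum_mul]
    exact hΦ.mul_right _
  · intro h
    have hterm : ∀ i, (q : Zsqrtd D) ∣ (w ^ i - 1) := fun i =>
      h.trans (by simpa using sub_dvd_pow_sub_pow w 1 i)
    have hsum : (q : Zsqrtd D) ∣ ∑ i ∈ Finset.range p, (w ^ i - 1) :=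
      Finset.dvd_sum fun i _ => hterm i
    have hdvdp : (q : Zsqrtd D) ∣ (p : Zsqrtd D) := by
      have : (∑ i ∈ Finset.range p, (w ^ i - 1)) =
          (∑ i ∈ Finset.range p, w ^ i) - p := by
        rw [Finset.sum_sub_distrib]
        simp
      rw [this] at hsum
      have := dvd_sub hΦ hsum
      simpa using this
    have hqpZ : ((q : ℤ) : Zsqrtd D) ∣ ((p : ℤ) : Zsqrtd D) := by
      push_cast
      exact hdvdp
    rw [Zsqrtd.intCast_dvd_intCast] at hqpZ
    have : q ∣ p := Int.natCast_dvd_natCast.mp hqpZ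
    exact hqp ((Nat.prime_dvd_prime_iff_eq hq hp).mp this)
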